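/- Let X be a topological space, let U and V be nonempty compact metric spaces, and let F : X × U × V → ℝ be jointly continuous. Fix x_0 ∈ X and suppose sup_{u∈U} inf_{v∈V} F(x_0,u,v) < 0. Then there exist ε > 0, a Borel measurable function h : U → V, and an open neighborhood N of x_0 in X such that F(x, u, h(u)) < −ε for every x ∈ N and every u ∈ U. -/

import Mathlib

open Topology Classical

/-- Piecewise-constant selection: pick the value of the first pair whose set
contains `u`, else the default. -/
noncomputable def pieceSel {U V : Type*} : List (Set U × V) → V → U → V
  | [], v0, _ => v0
  | p :: rest, v0, u => if u ∈ p.1 then p.2 else pieceSel rest v0 u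

lemma pieceSel_measurable {U V : Type*} [MeasurableSpace U] [MeasurableSpace V]
    (l : List (Set U × V)) (v0 : V) (hl : ∀ p ∈ l, MeasurableSet p.1) :
    Measurable (pieceSel l v0) := by
  induction l with
  | nil => exact measurable_const
  | cons p rest ih =>
      have hp : MeasurableSet p.1 := hl p (List.mem_cons_self)
      have hr : Measurable (pieceSel rest v0) :=
        ih fun q hq => hl q (List.mem_cons_of_mem _ hq)
      show Measurable fun u => if u ∈ p.1 then p.2 else pieceSel rest v0 u
      exact Measurable.ite hp measurable_const hr

lemma pieceSel_spec {U V : Type*} (P : U → V → Prop)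
    (l : List (Set U × V)) (v0 : V)
    (hP : ∀ p ∈ l, ∀ u ∈ p.1, P u p.2)
    (u : U) (hu : ∃ p ∈ l, u ∈ p.1) :
    P u (pieceSel l v0 u) := by
  induction l with
  | nil => rcases hu with ⟨p, hp, _⟩; exact absurd hp List.not_mem_nil
  | cons p rest ih =>
      by_cases h : u ∈ p.1
      · simpa [pieceSel, h] using hP p (List.mem_cons_self) u h
      · have hu' : ∃ q ∈ rest, u ∈ q.1 := by
          rcases hu with ⟨q, hq, hq'⟩
          rcases List.mem_cons.mp hq with rfl | hq
          · exact absurd hq' h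
          · exact ⟨q, hq, hq'⟩
        simpa [pieceSel, h] using
          ih (fun q hq => hP q (List.mem_cons_of_mem _ hq)) hu'

/-- Measurable selection plus localization for the sub-solution property: if
`sup_u inf_v F(x₀,u,v) < 0` with `U, V` compact metric spaces and `F` jointly
continuous, then there exist `ε > 0`, a Borel measurable counter-control map
`h : U → V`, and an open neighborhood `N` of `x₀` on which `F(x, u, h(u)) < −ε`
for every `u`. -/
theorem localization_subsolution_measurable_selection
    {X U V : Type*} [TopologicalSpace X]
    [MetricSpace U] [CompactSpace U] [Nonempty U]
    [MeasurableSpace U] [BorelSpace U]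
    [MetricSpace V] [CompactSpace V] [Nonempty V]
    [MeasurableSpace V] [BorelSpace V]
    (F : X → U → V → ℝ)
    (hF : Continuous fun p : X × U × V => F p.1 p.2.1 p.2.2)
    (x₀ : X) (hneg : (⨆ u : U, ⨅ v : V, F x₀ u v) < 0) :
    ∃ (ε : ℝ) (h : U → V) (N : Set X), 0 < ε ∧ Measurable h ∧
      IsOpen N ∧ x₀ ∈ N ∧ ∀ x ∈ N, ∀ u : U, F x u (h u) < -ε := by
  classical
  set s : ℝ := ⨆ u : U, ⨅ v : V, F x₀ u v with hs
  set ε : ℝ := -s / 2 with hε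
  have hε0 : 0 < ε := by simp [hε]; linarith
  -- continuity of F x₀ on U × V
  have hcont0 : Continuous fun p : U × V => F x₀ p.1 p.2 :=
    hF.comp (continuous_const.prodMk continuous_id)
  -- global bounds on F x₀
  obtain ⟨pM, -, hpM⟩ := isCompact_univ.exists_isMaxOn Set.univ_nonempty
    hcont0.continuousOn
  obtain ⟨pm, -, hpm⟩ := isCompact_univ.exists_isMinOn Set.univ_nonempty
    hcont0.continuousOn
  -- boundedness facts
  have hbddBelow : ∀ u : U, BddBelow (Set.range fun v : V => F x₀ u v) := by
    intro u
    exact ⟨F x₀ pm.1 pm.2, by rintro y ⟨v, rfl⟩; exact hpm (Set.mem_univ (u, v))⟩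
  have hbddAbove : BddAbove (Set.range fun u : U => ⨅ v : V, F x₀ u v) := by
    refine ⟨F x₀ pM.1 pM.2, ?_⟩
    rintro y ⟨u, rfl⟩
    calc ⨅ v : V, F x₀ u v ≤ F x₀ u (Classical.arbitrary V) :=
          ciInf_le (hbddBelow u) _
      _ ≤ F x₀ pM.1 pM.2 := hpM (Set.mem_univ (u, Classical.arbitrary V))
  -- for each u choose a counter-control and a localization
  have key : ∀ u : U, ∃ (vu : V) (Nu : Set X) (Wu : Set U),
      IsOpen Nu ∧ IsOpen Wu ∧ x₀ ∈ Nu ∧ u ∈ Wu ∧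
      ∀ x ∈ Nu, ∀ u' ∈ Wu, F x u' vu < -ε := by
    intro u
    have hinf : (⨅ v : V, F x₀ u v) < -ε := by
      have h1 : (⨅ v : V, F x₀ u v) ≤ s := le_ciSup hbddAbove u
      have : s < -ε := by rw [hε]; linarith
      linarith
    obtain ⟨vu, hvu⟩ := exists_lt_of_ciInf_lt hinf
    -- continuity of (x, u') ↦ F x u' vu
    have hG : Continuous fun p : X × U => F p.1 p.2 vu :=
      hF.comp (continuous_fst.prodMk (continuous_snd.prodMk continuous_const))
    have hopen : IsOpen {p : X × U | F p.1 p.2 vu < -ε} :=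
      isOpen_lt hG continuous_const
    have hmem : (x₀, u) ∈ {p : X × U | F p.1 p.2 vu < -ε} := hvu
    rw [isOpen_prod_iff] at hopen
    obtain ⟨Nu, Wu, hNo, hWo, hxN, huW, hsub⟩ := hopen x₀ u hmem
    exact ⟨vu, Nu, Wu, hNo, hWo, hxN, huW,
      fun x hx u' hu' => hsub (Set.mk_mem_prod hx hu')⟩
  choose v N W hNopen hWopen hxN huW hprop using key
  -- finite subcover of U by the W u
  obtain ⟨t, ht⟩ := isCompact_univ.elim_finite_subcover W hWopen
    (fun u _ => Set.mem_iUnion.mpr ⟨u, huW u⟩)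
  -- the neighborhood
  refine ⟨ε, pieceSel (t.toList.map fun a => (W a, v a)) (Classical.arbitrary V),
    ⋂ a ∈ t, N a, hε0, ?_, ?_, ?_, ?_⟩
  · refine pieceSel_measurable _ _ ?_
    intro p hp
    rcases List.mem_map.mp hp with ⟨a, -, rfl⟩
    exact (hWopen a).measurableSet
  · exact isOpen_biInter_finset fun a _ => hNopen a
  · exact Set.mem_iInter₂.mpr fun a _ => hxN a
  · intro x hx u
    have hcov : ∃ p ∈ t.toList.map fun a => (W a, v a), u ∈ p.1 := by
      have := ht (Set.mem_univ u)
      rcases Set.mem_iUnion₂.mp this with ⟨a, ha, hua⟩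
      exact ⟨(W a, v a), List.mem_map.mpr ⟨a, (Finset.mem_toList).mpr ha, rfl⟩, hua⟩
    refine pieceSel_spec (fun u' w => F x u' w < -ε) _ _ ?_ u hcov
    intro p hp u' hu'
    rcases List.mem_map.mp hp with ⟨a, ha, rfl⟩
    exact hprop a x (Set.mem_iInter₂.mp hx a ((Finset.mem_toList).mp ha)) u' hu'
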